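/- A category is abelian if and only if it is additive and Barr exact (i.e., regular with effective equivalence relations). -/

import Mathlib

/-!
STATEMENT 7 (Tierney): a category is abelian if and only if it is additive
(preadditive with finite biproducts) and Barr exact (regular with effective
equivalence relations).
-/

open CategoryTheory CategoryTheory.Limits

/-- An internal equivalence relation: a jointly monic pair `r₁, r₂ : R ⟶ X` which is
reflexive, symmetric and transitive. -/
structure IsEquivalenceRelation {C : Type*} [Category C] {R X : C} (r₁ r₂ : R ⟶ X) : Prop where
  jointly_mono : ∀ {T : C} (a b : T ⟶ R), a ≫ r₁ = b ≫ r₁ → a ≫ r₂ = b ≫ r₂ → a = b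
  refl : ∃ ρ : X ⟶ R, ρ ≫ r₁ = 𝟙 X ∧ ρ ≫ r₂ = 𝟙 X
  symm : ∃ σ : R ⟶ R, σ ≫ r₁ = r₂ ∧ σ ≫ r₂ = r₁
  trans : ∀ {P : C} (p₁ p₂ : P ⟶ R), IsPullback p₁ p₂ r₂ r₁ →
    ∃ τ : P ⟶ R, τ ≫ r₁ = p₁ ≫ r₁ ∧ τ ≫ r₂ = p₂ ≫ r₂

/-- A Barr exact category: finite limits, coequalizers of kernel pairs, regular
epimorphisms stable under pullback, and effective equivalence relations. -/
structure BarrExact (C : Type*) [Category C] : Prop where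
  hasFiniteLimits : HasFiniteLimits C
  coeq_of_kernelPair : ∀ {R X Y : C} (r₁ r₂ : R ⟶ X) (f : X ⟶ Y),
    IsKernelPair f r₁ r₂ → HasCoequalizer r₁ r₂
  regularEpi_stable : ∀ {X Y Z P : C} (f : X ⟶ Y) (g : Z ⟶ Y) (p₁ : P ⟶ Z) (p₂ : P ⟶ X),
    Nonempty (RegularEpi f) → IsPullback p₁ p₂ g f → Nonempty (RegularEpi p₁)
  effective : ∀ {R X : C} (r₁ r₂ : R ⟶ X), _root_.IsEquivalenceRelation r₁ r₂ →
    ∃ (Y : C) (f : X ⟶ Y), IsKernelPair f r₁ r₂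

namespace TierneyAux

variable {C : Type*} [Category C]

section General

/-- Every kernel pair is an equivalence relation. -/
lemma isEquivalenceRelation_of_isKernelPair {R X Y : C} {f : X ⟶ Y} {a b : R ⟶ X}
    (h : IsKernelPair f a b) : _root_.IsEquivalenceRelation a b where
  jointly_mono u v h1 h2 := h.hom_ext h1 h2
  refl := ⟨h.lift (𝟙 X) (𝟙 X) rfl, h.lift_fst _ _ _, h.lift_snd _ _ _⟩
  symm := ⟨h.lift b a h.w.symm, h.lift_fst _ _ _, h.lift_snd _ _ _⟩
  trans := fun p₁ p₂ hp => by
    have w : (p₁ ≫ a) ≫ f = (p₂ ≫ b) ≫ f := by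
      calc (p₁ ≫ a) ≫ f = p₁ ≫ b ≫ f := by rw [Category.assoc, h.w]
        _ = (p₂ ≫ a) ≫ f := by rw [← Category.assoc, hp.w, Category.assoc]
        _ = (p₂ ≫ b) ≫ f := by rw [Category.assoc, h.w, Category.assoc]
    exact ⟨h.lift (p₁ ≫ a) (p₂ ≫ b) w, h.lift_fst _ _ _, h.lift_snd _ _ _⟩

/-- If `(r₁, r₂)` is a kernel pair of some map `g` and the coequalizer of `(r₁, r₂)`
exists, then `(r₁, r₂)` is also the kernel pair of the coequalizer projection. -/
lemma isKernelPair_coequalizerπ {R X Y : C} {r₁ r₂ : R ⟶ X} {g : X ⟶ Y}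
    (h : IsKernelPair g r₁ r₂) [HasCoequalizer r₁ r₂] :
    IsKernelPair (coequalizer.π r₁ r₂) r₁ r₂ := by
  have hg : coequalizer.π r₁ r₂ ≫ coequalizer.desc g h.w = g := coequalizer.π_desc _ _
  refine IsPullback.of_isLimit (PullbackCone.IsLimit.mk (coequalizer.condition r₁ r₂)
      (fun s => h.lift s.fst s.snd (by
        calc s.fst ≫ g = s.fst ≫ coequalizer.π r₁ r₂ ≫ coequalizer.desc g h.w := by rw [hg]
          _ = s.snd ≫ coequalizer.π r₁ r₂ ≫ coequalizer.desc g h.w := by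
              rw [← Category.assoc, s.condition, Category.assoc]
          _ = s.snd ≫ g := by rw [hg]))
      (fun s => h.lift_fst _ _ _) (fun s => h.lift_snd _ _ _)
      (fun s m h1 h2 => h.hom_ext (by rw [h1, h.lift_fst]) (by rw [h2, h.lift_snd])))

end General

section Forward

variable [Abelian C]

lemma forward_effective {R X : C} (r₁ r₂ : R ⟶ X) (hrel : _root_.IsEquivalenceRelation r₁ r₂) :
    ∃ (Y : C) (f : X ⟶ Y), IsKernelPair f r₁ r₂ := by
  obtain ⟨ρ, hρ₁, hρ₂⟩ := hrel.refl
  refine ⟨cokernel (r₁ - r₂), cokernel.π (r₁ - r₂), ?_⟩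
  have comm : r₁ ≫ cokernel.π (r₁ - r₂) = r₂ ≫ cokernel.π (r₁ - r₂) := by
    have h0 := cokernel.condition (r₁ - r₂)
    rw [Preadditive.sub_comp] at h0
    exact sub_eq_zero.mp h0
  have key : ∀ (T : C) (x y : T ⟶ X), x ≫ cokernel.π (r₁ - r₂) = y ≫ cokernel.π (r₁ - r₂) →
      ∃ l : T ⟶ R, l ≫ r₁ = x ∧ l ≫ r₂ = y := by
    intro T x y hxy
    have hc : (x - y) ≫ cokernel.π (r₁ - r₂) = 0 := by
      rw [Preadditive.sub_comp, hxy, sub_self]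
    obtain ⟨ℓ, hℓ⟩ := kernel.lift' (cokernel.π (r₁ - r₂)) (x - y) hc
    have he : Abelian.factorThruImage (r₁ - r₂) ≫ kernel.ι (cokernel.π (r₁ - r₂)) = r₁ - r₂ :=
      Abelian.image.fac (r₁ - r₂)
    set e := Abelian.factorThruImage (r₁ - r₂) with hedef
    set π₁ := pullback.fst ℓ e with hπ₁def
    set z := pullback.snd ℓ e with hzdef
    haveI : Epi π₁ := by rw [hπ₁def]; infer_instance
    have hzd : z ≫ (r₁ - r₂) = π₁ ≫ (x - y) := by
      calc z ≫ (r₁ - r₂) = z ≫ e ≫ kernel.ι (cokernel.π (r₁ - r₂)) := by rw [he]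
        _ = π₁ ≫ ℓ ≫ kernel.ι (cokernel.π (r₁ - r₂)) := by
            rw [← Category.assoc, ← pullback.condition, Category.assoc]
        _ = π₁ ≫ (x - y) := by rw [hℓ]
    have h1 : z ≫ r₁ - z ≫ r₂ = π₁ ≫ x - π₁ ≫ y := by
      rw [← Preadditive.comp_sub, ← Preadditive.comp_sub]; exact hzd
    set w : pullback ℓ e ⟶ R := z + (π₁ ≫ y - z ≫ r₂) ≫ ρ with hwdef
    have hw₁ : w ≫ r₁ = π₁ ≫ x := by
      have : w ≫ r₁ = z ≫ r₁ + (π₁ ≫ y - z ≫ r₂) := by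
        rw [hwdef, Preadditive.add_comp, Category.assoc, hρ₁, Category.comp_id]
      rw [this]
      calc z ≫ r₁ + (π₁ ≫ y - z ≫ r₂) = (z ≫ r₁ - z ≫ r₂) + π₁ ≫ y := by abel
        _ = (π₁ ≫ x - π₁ ≫ y) + π₁ ≫ y := by rw [h1]
        _ = π₁ ≫ x := by abel
    have hw₂ : w ≫ r₂ = π₁ ≫ y := by
      have : w ≫ r₂ = z ≫ r₂ + (π₁ ≫ y - z ≫ r₂) := by
        rw [hwdef, Preadditive.add_comp, Category.assoc, hρ₂, Category.comp_id]
      rw [this]; abel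
    obtain ⟨ne⟩ : Nonempty (NormalEpi π₁) := ⟨normalEpiOfEpi π₁⟩
    have hk : ne.g ≫ w = 0 := by
      apply hrel.jointly_mono (ne.g ≫ w) 0
      · rw [Category.assoc, hw₁, zero_comp, ← Category.assoc, ne.w, zero_comp]
      · rw [Category.assoc, hw₂, zero_comp, ← Category.assoc, ne.w, zero_comp]
    obtain ⟨l, hl⟩ := CokernelCofork.IsColimit.desc' ne.isColimit w hk
    have hl' : π₁ ≫ l = w := hl
    refine ⟨l, ?_, ?_⟩
    · rw [← cancel_epi π₁, ← Category.assoc, hl', hw₁]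
    · rw [← cancel_epi π₁, ← Category.assoc, hl', hw₂]
  choose lft hl₁ hl₂ using key
  exact IsPullback.of_isLimit (PullbackCone.IsLimit.mk comm
    (fun s => lft _ s.fst s.snd s.condition)
    (fun s => hl₁ _ _ _ _) (fun s => hl₂ _ _ _ _)
    (fun s m h1 h2 => hrel.jointly_mono m _ (by rw [h1, hl₁]) (by rw [h2, hl₂])))

lemma forward_stable {X Y Z P : C} (f : X ⟶ Y) (g : Z ⟶ Y) (p₁ : P ⟶ Z) (p₂ : P ⟶ X)
    (hf : Nonempty (RegularEpi f)) (hp : IsPullback p₁ p₂ g f) : Nonempty (RegularEpi p₁) := by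
  haveI := hf.some
  haveI : Epi f := RegularEpi.epi f hf.some
  haveI : Epi p₁ := by rw [← hp.isoPullback_hom_fst]; exact epi_comp _ _
  letI := normalEpiOfEpi p₁
  exact ⟨NormalEpi.regularEpi p₁⟩

end Forward



section Backward

variable [Preadditive C] [HasFiniteBiproducts C]

instance : HasBinaryBiproducts C := hasBinaryBiproducts_of_finite_biproducts C

lemma eqRel_of_mono {X Y : C} (m : X ⟶ Y) [Mono m] :
    _root_.IsEquivalenceRelation (biprod.snd : X ⊞ Y ⟶ Y) (biprod.desc m (𝟙 Y)) := by
  constructor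
  · intro T a b h1 h2
    simp only [biprod.desc_eq, Category.comp_id, Preadditive.comp_add] at h2
    have h3 : a ≫ biprod.fst ≫ m = b ≫ biprod.fst ≫ m := by
      have h4 : a ≫ biprod.fst ≫ m + a ≫ biprod.snd = b ≫ biprod.fst ≫ m + a ≫ biprod.snd := by
        rw [h2, h1]
      exact add_right_cancel h4
    apply biprod.hom_ext
    · rw [← cancel_mono m, Category.assoc, Category.assoc, h3]
    · exact h1
  · exact ⟨biprod.inr, biprod.inr_snd, biprod.inr_desc _ _⟩
  · refine ⟨biprod.lift (-biprod.fst) (biprod.desc m (𝟙 Y)), biprod.lift_snd _ _, ?_⟩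
    rw [biprod.lift_desc, Category.comp_id, biprod.desc_eq, Category.comp_id,
      Preadditive.neg_comp]
    abel
  · intro P p₁ p₂ hp
    refine ⟨biprod.lift (p₁ ≫ biprod.fst + p₂ ≫ biprod.fst) (p₁ ≫ biprod.snd),
      biprod.lift_snd _ _, ?_⟩
    have hw := hp.w
    simp only [biprod.desc_eq, Preadditive.comp_add, Category.comp_id, Category.assoc] at hw
    rw [biprod.lift_desc, Category.comp_id, Preadditive.add_comp, biprod.desc_eq,
      Category.comp_id, Preadditive.comp_add]
    simp only [Category.assoc, biprod.lift_fst, biprod.lift_snd]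
    rw [← hw]
    abel

lemma mono_package (hB : BarrExact C) {X Y : C} (m : X ⟶ Y) [Mono m] :
    Nonempty (NormalMono m) ∧ HasCokernel m := by
  haveI := hB.hasFiniteLimits
  obtain ⟨Z, g, hg⟩ := hB.effective _ _ (eqRel_of_mono m)
  haveI := hB.coeq_of_kernelPair _ _ g hg
  have hkp := isKernelPair_coequalizerπ hg
  have hmq : m ≫ coequalizer.π (biprod.snd : X ⊞ Y ⟶ Y) (biprod.desc m (𝟙 Y)) = 0 := by
    calc m ≫ coequalizer.π _ _
        = biprod.inl ≫ biprod.desc m (𝟙 Y) ≫ coequalizer.π _ _ := by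
          rw [← Category.assoc, biprod.inl_desc]
      _ = biprod.inl ≫ (biprod.snd : X ⊞ Y ⟶ Y) ≫ coequalizer.π _ _ := by
          rw [coequalizer.condition]
      _ = 0 := by rw [← Category.assoc, biprod.inl_snd, zero_comp]
  constructor
  · refine ⟨{ Z := _, g := coequalizer.π _ _, w := hmq, isLimit := ?_ }⟩
    refine KernelFork.IsLimit.ofι' m hmq (fun {A} k hk => ?_)
    have hu1 := hkp.lift_fst 0 k (by rw [zero_comp, hk])
    have hu2 := hkp.lift_snd 0 k (by rw [zero_comp, hk])
    set u := hkp.lift 0 k (by rw [zero_comp, hk]) with hudef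
    refine ⟨u ≫ biprod.fst, ?_⟩
    have h5 : u ≫ biprod.desc m (𝟙 Y) = u ≫ biprod.fst ≫ m + u ≫ biprod.snd := by
      rw [biprod.desc_eq, Category.comp_id, Preadditive.comp_add]
    rw [Category.assoc, ← add_zero (u ≫ biprod.fst ≫ m), ← hu1, ← h5, hu2]
  · apply HasColimit.mk
    refine ⟨CokernelCofork.ofπ (coequalizer.π _ _) hmq, ?_⟩
    refine CokernelCofork.IsColimit.ofπ _ hmq
      (fun {T} k hk => coequalizer.desc k ?_) (fun {T} k hk => coequalizer.π_desc _ _)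
      (fun {T} k hk l hl => ?_)
    · rw [biprod.desc_eq, Category.comp_id, Preadditive.add_comp, Category.assoc, hk,
        comp_zero, zero_add]
    · rw [← cancel_epi (coequalizer.π (biprod.snd : X ⊞ Y ⟶ Y) (biprod.desc m (𝟙 Y))),
        coequalizer.π_desc, hl]

omit [Preadditive C] [HasFiniteBiproducts C] in
lemma factor_package (hB : BarrExact C) {X Y : C} (f : X ⟶ Y) :
    ∃ (Q : C) (q : X ⟶ Q) (t : Q ⟶ Y), q ≫ t = f ∧ Epi q ∧ Mono t ∧
      (∀ {R : C} (a b : R ⟶ X), IsKernelPair f a b → ∀ {T : C} (h : X ⟶ T),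
        a ≫ h = b ≫ h → ∃! l : Q ⟶ T, q ≫ l = h) := by
  haveI := hB.hasFiniteLimits
  have hkpf : IsKernelPair f (pullback.fst f f) (pullback.snd f f) := IsPullback.of_hasPullback f f
  haveI := hB.coeq_of_kernelPair _ _ f hkpf
  have hqt : coequalizer.π _ _ ≫ coequalizer.desc f hkpf.w = f := coequalizer.π_desc _ _
  refine ⟨coequalizer _ _, coequalizer.π _ _, coequalizer.desc f hkpf.w, hqt,
    inferInstance, ?_, ?_⟩
  · constructor
    intro T u v huv
    set q := coequalizer.π (pullback.fst f f) (pullback.snd f f) with hqdef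
    set t := coequalizer.desc f hkpf.w with htdef
    have hreg : Nonempty (RegularEpi q) := ⟨coequalizerRegular _ _⟩
    obtain ⟨hπ⟩ := hB.regularEpi_stable _ u _ _ hreg (IsPullback.of_hasPullback u q)
    haveI := hπ
    set π := pullback.fst u q with hπdef
    set x₁ := pullback.snd u q with hx₁def
    haveI : Epi π := RegularEpi.epi π hπ
    obtain ⟨hπ'⟩ := hB.regularEpi_stable _ (π ≫ v) _ _ hreg
      (IsPullback.of_hasPullback (π ≫ v) q)
    haveI := hπ'
    set π' := pullback.fst (π ≫ v) q with hπ'def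
    set x₂ := pullback.snd (π ≫ v) q with hx₂def
    haveI : Epi π' := RegularEpi.epi π' hπ'
    have hc1 : π ≫ u = x₁ ≫ q := pullback.condition
    have hc2 : π' ≫ π ≫ v = x₂ ≫ q := pullback.condition
    have hy1q : (π' ≫ x₁) ≫ q = (π' ≫ π) ≫ u := by
      calc (π' ≫ x₁) ≫ q = π' ≫ x₁ ≫ q := Category.assoc _ _ _
        _ = π' ≫ π ≫ u := by rw [← hc1]
        _ = (π' ≫ π) ≫ u := (Category.assoc _ _ _).symm
    have hy2q : x₂ ≫ q = (π' ≫ π) ≫ v := by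
      rw [← hc2, Category.assoc]
    have hyf : (π' ≫ x₁) ≫ f = x₂ ≫ f := by
      calc (π' ≫ x₁) ≫ f = (π' ≫ x₁) ≫ q ≫ t := by rw [hqt]
        _ = ((π' ≫ x₁) ≫ q) ≫ t := (Category.assoc _ _ _).symm
        _ = ((π' ≫ π) ≫ u) ≫ t := by rw [hy1q]
        _ = (π' ≫ π) ≫ u ≫ t := Category.assoc _ _ _
        _ = (π' ≫ π) ≫ v ≫ t := by rw [huv]
        _ = ((π' ≫ π) ≫ v) ≫ t := (Category.assoc _ _ _).symm
        _ = (x₂ ≫ q) ≫ t := by rw [hy2q]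
        _ = x₂ ≫ q ≫ t := Category.assoc _ _ _
        _ = x₂ ≫ f := by rw [hqt]
    have hl1 := hkpf.lift_fst (π' ≫ x₁) x₂ hyf
    have hl2 := hkpf.lift_snd (π' ≫ x₁) x₂ hyf
    have hqq : (π' ≫ x₁) ≫ q = x₂ ≫ q := by
      calc (π' ≫ x₁) ≫ q
          = (hkpf.lift (π' ≫ x₁) x₂ hyf ≫ pullback.fst f f) ≫ q := by rw [hl1]
        _ = hkpf.lift (π' ≫ x₁) x₂ hyf ≫ pullback.fst f f ≫ q := Category.assoc _ _ _
        _ = hkpf.lift (π' ≫ x₁) x₂ hyf ≫ pullback.snd f f ≫ q := by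
            have hcond : pullback.fst f f ≫ q = pullback.snd f f ≫ q :=
              coequalizer.condition _ _
            rw [hcond]
        _ = (hkpf.lift (π' ≫ x₁) x₂ hyf ≫ pullback.snd f f) ≫ q := (Category.assoc _ _ _).symm
        _ = x₂ ≫ q := by rw [hl2]
    have hfin : (π' ≫ π) ≫ u = (π' ≫ π) ≫ v := by
      rw [← hy1q, ← hy2q, hqq]
    exact (cancel_epi (π' ≫ π)).mp hfin
  · intro R a b hab T h hh
    have hpf : pullback.fst f f ≫ h = pullback.snd f f ≫ h := by
      have hφ1 := hab.lift_fst (pullback.fst f f) (pullback.snd f f) pullback.condition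
      have hφ2 := hab.lift_snd (pullback.fst f f) (pullback.snd f f) pullback.condition
      calc pullback.fst f f ≫ h
          = (hab.lift (pullback.fst f f) (pullback.snd f f) pullback.condition ≫ a) ≫ h := by
            rw [hφ1]
        _ = hab.lift (pullback.fst f f) (pullback.snd f f) pullback.condition ≫ a ≫ h :=
            Category.assoc _ _ _
        _ = hab.lift (pullback.fst f f) (pullback.snd f f) pullback.condition ≫ b ≫ h := by
            rw [hh]
        _ = (hab.lift (pullback.fst f f) (pullback.snd f f) pullback.condition ≫ b) ≫ h :=
            (Category.assoc _ _ _).symm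
        _ = pullback.snd f f ≫ h := by rw [hφ2]
    exact ⟨coequalizer.desc h hpf, coequalizer.π_desc _ _, fun l hl => by
      rw [← cancel_epi (coequalizer.π (pullback.fst f f) (pullback.snd f f)),
        coequalizer.π_desc, hl]⟩

lemma normalEpi_of_epi (hB : BarrExact C) {X Y : C} (e : X ⟶ Y) [Epi e] : Nonempty (NormalEpi e) := by
  haveI := hB.hasFiniteLimits
  obtain ⟨Q, q, t, hqt, hq, ht, hdesc⟩ := factor_package hB e
  haveI := hq; haveI := ht
  haveI : Epi t := by
    have h1 : Epi (q ≫ t) := hqt ▸ ‹Epi e›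
    exact epi_of_epi q t
  obtain ⟨⟨nm⟩, -⟩ := mono_package hB t
  have hg0 : nm.g = 0 := by rw [← cancel_epi t, nm.w, comp_zero]
  obtain ⟨s, hs⟩ := KernelFork.IsLimit.lift' nm.isLimit (𝟙 _) (by rw [hg0, comp_zero])
  haveI : IsSplitEpi t := ⟨⟨⟨s, hs⟩⟩⟩
  haveI : IsIso t := isIso_of_mono_of_isSplitEpi t
  have w : (pullback.fst e e - pullback.snd e e) ≫ e = 0 := by
    rw [Preadditive.sub_comp, pullback.condition, sub_self]
  refine ⟨?_⟩
  refine { W := pullback e e, g := pullback.fst e e - pullback.snd e e, w := w,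
           isColimit := ?_ }
  refine CokernelCofork.IsColimit.ofπ' e w (fun {T} k hk => ?_)
  have hk' : pullback.fst e e ≫ k = pullback.snd e e ≫ k := by
    rw [Preadditive.sub_comp] at hk
    exact sub_eq_zero.mp hk
  have hex := hdesc _ _ (IsPullback.of_hasPullback e e) k hk'
  refine ⟨inv t ≫ hex.choose, ?_⟩
  have hl : q ≫ hex.choose = k := hex.choose_spec.1
  calc e ≫ inv t ≫ hex.choose = (q ≫ t) ≫ inv t ≫ hex.choose := by rw [hqt]
    _ = q ≫ hex.choose := by rw [Category.assoc, IsIso.hom_inv_id_assoc]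
    _ = k := hl

lemma backward (hB : BarrExact C) : Nonempty (Abelian C) := by
  haveI := hB.hasFiniteLimits
  haveI : HasCokernels C := ⟨fun {X Y} f => by
    obtain ⟨Q, q, t, hqt, hq, ht, -⟩ := factor_package hB f
    haveI := hq; haveI := ht
    haveI : HasCokernel t := (mono_package hB t).2
    have : HasCokernel (q ≫ t) := inferInstance
    exact hqt ▸ this⟩
  haveI : IsNormalMonoCategory C := ⟨fun f hf => by
    haveI := hf
    exact (mono_package hB f).1⟩
  haveI : IsNormalEpiCategory C := ⟨fun f hf => by
    haveI := hf
    exact (normalEpi_of_epi hB f)⟩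
  exact ⟨{ toPreadditive := inferInstance, toIsNormalMonoCategory := inferInstance,
           toIsNormalEpiCategory := inferInstance }⟩

end Backward



end TierneyAux

/-- Tierney's theorem: abelian = additive + Barr exact. -/
theorem abelian_iff_additive_barrExact (C : Type*) [Category C] :
    Nonempty (Abelian C) ↔
      ∃ p : Preadditive C,
        @HasFiniteBiproducts C _ (@Preadditive.preadditiveHasZeroMorphisms C _ p)
          ∧ BarrExact C := by
  constructor
  · rintro ⟨hA⟩
    letI := hA
    refine ⟨hA.toPreadditive, Abelian.hasFiniteBiproducts, ?_⟩
    exact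
      { hasFiniteLimits := inferInstance
        coeq_of_kernelPair := fun r₁ r₂ f _ => inferInstance
        regularEpi_stable := fun f g p₁ p₂ hf hp => TierneyAux.forward_stable f g p₁ p₂ hf hp
        effective := fun r₁ r₂ hrel => TierneyAux.forward_effective r₁ r₂ hrel }
  · rintro ⟨p, hbp, hB⟩
    letI := p
    haveI : HasFiniteBiproducts C := hbp
    exact TierneyAux.backward hB
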